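/- For every z in the open unit disk of the complex plane, the integral over the unit disk of the absolute value of the Green function G(z,ζ) = (1/(2π)) log |(1 - z·conj(ζ))/(z - ζ)| with respect to Lebesgue area measure in ζ equals (1 - |z|²)/4. -/

import Mathlib

open MeasureTheory Complex

/-- Green function of the unit disk. -/
noncomputable def greenD (z ζ : ℂ) : ℝ :=
  (1 / (2 * Real.pi)) * Real.log ‖(1 - z * (starRingEnd ℂ) ζ) / (z - ζ)‖

open Real Set Metric

lemma lemA (a : ℂ) (ha : ‖a‖ < 1) :
    ∫ θ in (0:ℝ)..(2*π), Real.log ‖1 - a * Complex.exp (θ * Complex.I)‖ = 0 := by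
  set f : ℂ → ℂ := fun w => Complex.log (1 - a * w) with hf
  have hslit : ∀ w ∈ closedBall (0:ℂ) 1, (1 - a * w) ∈ Complex.slitPlane := by
    intro w hw
    apply Complex.mem_slitPlane_iff.2
    left
    have h1 : (1 - a * w).re = 1 - (a*w).re := by simp
    have h2 : (a*w).re ≤ ‖a*w‖ := Complex.re_le_norm _
    have h3 : ‖a*w‖ < 1 := by
      rw [norm_mul]
      calc ‖a‖ * ‖w‖ ≤ ‖a‖ * 1 := by
            refine mul_le_mul_of_nonneg_left ?_ (norm_nonneg a)
            simpa [Metric.mem_closedBall] using hw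
        _ < 1 := by simpa using ha
    rw [h1]; linarith
  have hcont : ContinuousOn f (closedBall (0:ℂ) 1) := by
    intro w hw
    have hg : ContinuousAt (fun w : ℂ => 1 - a * w) w := by fun_prop
    exact (ContinuousAt.comp (f := fun w : ℂ => 1 - a * w)
      (continuousAt_clog (hslit w hw)) hg).continuousWithinAt
  have hdiff : ∀ w ∈ ball (0:ℂ) 1 \ (∅ : Set ℂ), DifferentiableAt ℂ f w := by
    intro w hw
    have := hslit w (ball_subset_closedBall hw.1)
    exact DifferentiableAt.comp (g := Complex.log) (f := fun w : ℂ => 1 - a * w) w (Complex.differentiableAt_log this) (by fun_prop)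
  have key := Complex.circleIntegral_sub_center_inv_smul_of_differentiable_on_off_countable
    one_pos countable_empty hcont hdiff
  have hf0 : f 0 = 0 := by simp [hf]
  rw [hf0, smul_zero] at key
  rw [circleIntegral] at key
  have hint : (∫ θ in (0:ℝ)..(2*π), deriv (circleMap 0 1) θ • ((circleMap 0 1 θ - 0)⁻¹ • f (circleMap 0 1 θ)))
      = ∫ θ in (0:ℝ)..(2*π), Complex.I * f (circleMap 0 1 θ) := by
    apply intervalIntegral.integral_congr
    intro θ _
    have hne : circleMap 0 1 θ ≠ 0 := circleMap_ne_center one_ne_zero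
    simp only [deriv_circleMap, sub_zero, smul_eq_mul]
    field_simp
  rw [hint, intervalIntegral.integral_const_mul] at key
  have key2 : (∫ θ in (0:ℝ)..(2*π), f (circleMap 0 1 θ)) = 0 := by
    rcases mul_eq_zero.1 key with h | h
    · exact absurd h Complex.I_ne_zero
    · exact h
  have hmeas : IntervalIntegrable (fun θ => f (circleMap 0 1 θ)) volume 0 (2*π) := by
    apply Continuous.intervalIntegrable
    exact hcont.comp_continuous (continuous_circleMap 0 1)
      (fun θ => sphere_subset_closedBall (circleMap_mem_sphere (0:ℂ) one_pos.le θ))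
  have h02 : (0:ℝ) ≤ 2*π := by positivity
  have step : (∫ θ in (0:ℝ)..(2*π), Real.log ‖1 - a * Complex.exp (θ * Complex.I)‖)
      = ∫ θ in (0:ℝ)..(2*π), Complex.re (f (circleMap 0 1 θ)) := by
    apply intervalIntegral.integral_congr
    intro θ _
    simp only [hf, Complex.log_re, circleMap_zero, Complex.ofReal_one, one_mul]
  rw [step, intervalIntegral.integral_of_le h02]
  rw [intervalIntegral.integral_of_le h02] at key2
  have := integral_re (𝕜 := ℂ) hmeas.1
  rw [key2] at this
  simpa [RCLike.re_to_complex] using this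

lemma lemA' (a : ℂ) (ha : ‖a‖ < 1) :
    ∫ θ in (-π)..π, Real.log ‖1 - a * Complex.exp (θ * Complex.I)‖ = 0 := by
  have hp : Function.Periodic (fun θ : ℝ => Real.log ‖1 - a * Complex.exp (θ * Complex.I)‖) (2*π) := by
    intro θ
    have : Complex.exp ((↑(θ + 2*π)) * Complex.I) = Complex.exp (θ * Complex.I) := by
      push_cast
      rw [add_mul, Complex.exp_add, Complex.exp_two_pi_mul_I, mul_one]
    simp only [this]
  have h := hp.intervalIntegral_add_eq (-π) 0
  have h1 : -π + 2*π = π := by ring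
  rw [h1, zero_add] at h
  rw [h]
  exact lemA a ha

lemma norm_exp_sub (a : ℂ) (θ : ℝ) :
    ‖Complex.exp (θ * Complex.I) - a‖ = ‖1 - (starRingEnd ℂ) a * Complex.exp (θ * Complex.I)‖ := by
  set E := Complex.exp ((θ:ℂ) * Complex.I) with hEdef
  have hE1 : ‖E‖ = 1 := by
    simp [hEdef, Complex.norm_exp_ofReal_mul_I]
  have hc : (starRingEnd ℂ) E = Complex.exp (-(θ:ℂ) * Complex.I) := by
    rw [hEdef, ← Complex.exp_conj]
    congr 1
    simp [Complex.conj_ofReal]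
  have hmul : E * (starRingEnd ℂ) E = 1 := by
    rw [hc, hEdef, ← Complex.exp_add]
    have : (θ:ℂ)*Complex.I + -(θ:ℂ)*Complex.I = 0 := by ring
    rw [this, Complex.exp_zero]
  calc ‖E - a‖ = ‖(starRingEnd ℂ) (E - a)‖ := (RCLike.norm_conj _).symm
    _ = ‖E‖ * ‖(starRingEnd ℂ) E - (starRingEnd ℂ) a‖ := by rw [map_sub, hE1, one_mul]
    _ = ‖E * ((starRingEnd ℂ) E - (starRingEnd ℂ) a)‖ := by rw [norm_mul, hE1, one_mul]
    _ = ‖1 - (starRingEnd ℂ) a * E‖ := by rw [mul_sub, hmul]; ring_nf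

lemma lemC (a : ℂ) (ha : ‖a‖ < 1) :
    ∫ θ in (-π)..π, Real.log ‖Complex.exp (θ * Complex.I) - a‖ = 0 := by
  have : ∀ θ ∈ uIcc (-π) π, Real.log ‖Complex.exp (θ * Complex.I) - a‖
      = Real.log ‖1 - (starRingEnd ℂ) a * Complex.exp (θ * Complex.I)‖ := by
    intro θ _
    rw [norm_exp_sub]
  rw [intervalIntegral.integral_congr this]
  exact lemA' _ (by rwa [RCLike.norm_conj])

lemma norm_identity (z ζ : ℂ) :
    ‖1 - z * (starRingEnd ℂ) ζ‖^2 - ‖z - ζ‖^2 = (1 - ‖z‖^2) * (1 - ‖ζ‖^2) := by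
  simp only [Complex.sq_norm, Complex.normSq_apply, Complex.sub_re,
    Complex.sub_im, Complex.mul_re, Complex.mul_im, Complex.one_re, Complex.one_im,
    Complex.conj_re, Complex.conj_im]
  ring

lemma green_nonneg {z ζ : ℂ} (hz : ‖z‖ < 1) (hζ : ‖ζ‖ < 1) : 0 ≤ greenD z ζ := by
  rcases eq_or_ne ζ z with h | h
  · simp [greenD, h]
  · apply mul_nonneg (by positivity)
    apply Real.log_nonneg
    rw [norm_div]
    have hden : (0:ℝ) < ‖z - ζ‖ := by
      rw [norm_pos_iff, sub_ne_zero]; exact (Ne.symm h)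
    rw [le_div_iff₀ hden, one_mul]
    have hid := norm_identity z ζ
    nlinarith [norm_nonneg (1 - z * (starRingEnd ℂ) ζ), norm_nonneg (z - ζ), norm_nonneg z,
      norm_nonneg ζ, sq_nonneg (‖1 - z * (starRingEnd ℂ) ζ‖ + ‖z - ζ‖),
      mul_pos (by nlinarith [norm_nonneg z] : (0:ℝ) < 1 - ‖z‖^2)
        (by nlinarith [norm_nonneg ζ] : (0:ℝ) < 1 - ‖ζ‖^2)]

lemma normE (θ : ℝ) : ‖Complex.exp ((θ:ℂ) * Complex.I)‖ = 1 := by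
  simp [Complex.norm_exp_ofReal_mul_I]

lemma inner_eval (z : ℂ) (hz1 : ‖z‖ < 1) {r : ℝ} (hr0 : 0 < r) (hr1 : r < 1) (hrz : r ≠ ‖z‖) :
    ∫ θ in (-π)..π,
      Real.log ‖(1 - z * (starRingEnd ℂ) ((r:ℂ) * Complex.exp (θ * Complex.I)))
        / (z - (r:ℂ) * Complex.exp (θ * Complex.I))‖
      = -(2 * π * Real.log (max ‖z‖ r)) := by
  have hzr1 : ‖z‖ * r < 1 := by nlinarith [norm_nonneg z]
  -- nonvanishing facts
  have hA : ∀ θ : ℝ, (1 - z * (starRingEnd ℂ) ((r:ℂ) * Complex.exp (θ * Complex.I))) ≠ 0 := by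
    intro θ h
    rw [sub_eq_zero] at h
    have : ‖z * (starRingEnd ℂ) ((r:ℂ) * Complex.exp (θ * Complex.I))‖ = 1 := by
      rw [← h]; simp
    rw [norm_mul, RCLike.norm_conj, norm_mul, normE] at this
    simp only [Complex.norm_real, Real.norm_eq_abs, abs_of_pos hr0, mul_one] at this
    linarith
  have hB : ∀ θ : ℝ, (z - (r:ℂ) * Complex.exp (θ * Complex.I)) ≠ 0 := by
    intro θ h
    rw [sub_eq_zero] at h
    apply hrz
    rw [h, norm_mul, normE, mul_one]
    simp [abs_of_pos hr0]
  -- continuity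
  have hbase : Continuous fun θ : ℝ => 1 - z * (starRingEnd ℂ) ((r:ℂ) * Complex.exp (θ * Complex.I)) := by
    apply continuous_const.sub
    apply continuous_const.mul
    exact Complex.continuous_conj.comp (by fun_prop)
  have hcontA : Continuous fun θ : ℝ =>
      Real.log ‖1 - z * (starRingEnd ℂ) ((r:ℂ) * Complex.exp (θ * Complex.I))‖ := by
    apply Continuous.log hbase.norm
    intro θ; exact norm_ne_zero_iff.2 (hA θ)
  have hcontB : Continuous fun θ : ℝ =>
      Real.log ‖z - (r:ℂ) * Complex.exp (θ * Complex.I)‖ := by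
    apply Continuous.log (by fun_prop)
    intro θ; exact norm_ne_zero_iff.2 (hB θ)
  -- split log
  have hsplit : ∫ θ in (-π)..π,
      Real.log ‖(1 - z * (starRingEnd ℂ) ((r:ℂ) * Complex.exp (θ * Complex.I)))
        / (z - (r:ℂ) * Complex.exp (θ * Complex.I))‖
      = (∫ θ in (-π)..π, Real.log ‖1 - z * (starRingEnd ℂ) ((r:ℂ) * Complex.exp (θ * Complex.I))‖)
        - ∫ θ in (-π)..π, Real.log ‖z - (r:ℂ) * Complex.exp (θ * Complex.I)‖ := by
    rw [← intervalIntegral.integral_sub (hcontA.intervalIntegrable _ _)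
      (hcontB.intervalIntegrable _ _)]
    apply intervalIntegral.integral_congr
    intro θ _
    dsimp only
    rw [norm_div, Real.log_div (norm_ne_zero_iff.2 (hA θ)) (norm_ne_zero_iff.2 (hB θ))]
  -- first term is zero
  have hterm1 : (∫ θ in (-π)..π,
      Real.log ‖1 - z * (starRingEnd ℂ) ((r:ℂ) * Complex.exp (θ * Complex.I))‖) = 0 := by
    have hcongr : ∀ θ ∈ uIcc (-π) π,
        Real.log ‖1 - z * (starRingEnd ℂ) ((r:ℂ) * Complex.exp (θ * Complex.I))‖
        = Real.log ‖1 - ((starRingEnd ℂ) z * r) * Complex.exp (θ * Complex.I)‖ := by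
      intro θ _
      congr 1
      calc ‖1 - z * (starRingEnd ℂ) ((r:ℂ) * Complex.exp (θ * Complex.I))‖
          = ‖(starRingEnd ℂ) (1 - z * (starRingEnd ℂ) ((r:ℂ) * Complex.exp (θ * Complex.I)))‖ :=
            (RCLike.norm_conj _).symm
        _ = ‖1 - ((starRingEnd ℂ) z * r) * Complex.exp (θ * Complex.I)‖ := by
            rw [map_sub, map_one, map_mul, Complex.conj_conj, ← mul_assoc]
    rw [intervalIntegral.integral_congr hcongr]
    apply lemA'
    rw [norm_mul, RCLike.norm_conj]
    simpa [abs_of_pos hr0] using hzr1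
  -- second term
  have hterm2 : (∫ θ in (-π)..π, Real.log ‖z - (r:ℂ) * Complex.exp (θ * Complex.I)‖)
      = 2 * π * Real.log (max ‖z‖ r) := by
    rcases hrz.lt_or_gt with hlt | hlt
    · -- r < ‖z‖, so z ≠ 0, max = ‖z‖
      have hz0 : z ≠ 0 := by
        intro h; rw [h, norm_zero] at hlt; linarith
      have hmax : max ‖z‖ r = ‖z‖ := max_eq_left hlt.le
      have hra : ‖(r:ℂ)/z‖ < 1 := by
        rw [norm_div, div_lt_one (norm_pos_iff.mpr hz0)]
        simpa [abs_of_pos hr0] using hlt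
      have hcongr : ∀ θ ∈ uIcc (-π) π, Real.log ‖z - (r:ℂ) * Complex.exp (θ * Complex.I)‖
          = Real.log ‖z‖ + Real.log ‖1 - ((r:ℂ)/z) * Complex.exp (θ * Complex.I)‖ := by
        intro θ _
        have hfac : z - (r:ℂ) * Complex.exp (θ * Complex.I)
            = z * (1 - ((r:ℂ)/z) * Complex.exp (θ * Complex.I)) := by
          field_simp
        have h2 : ‖1 - ((r:ℂ)/z) * Complex.exp (θ * Complex.I)‖ ≠ 0 := by
          have := hB θ
          rw [hfac] at this
          exact norm_ne_zero_iff.2 (mul_ne_zero_iff.1 this).2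
        rw [hfac, norm_mul, Real.log_mul (norm_ne_zero_iff.2 hz0) h2]
      rw [intervalIntegral.integral_congr hcongr, intervalIntegral.integral_add
        intervalIntegrable_const ?hi, lemA' _ hra, intervalIntegral.integral_const, hmax]
      · rw [add_zero, smul_eq_mul]; ring
      case hi =>
        apply Continuous.intervalIntegrable
        apply Continuous.log (by fun_prop)
        intro θ
        rw [norm_ne_zero_iff]
        intro h
        rw [sub_eq_zero] at h
        have : ‖((r:ℂ)/z) * Complex.exp (θ * Complex.I)‖ = 1 := by rw [← h]; simp
        rw [norm_mul, normE, mul_one] at this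
        rw [this] at hra; linarith
    · -- ‖z‖ < r, max = r
      have hmax : max ‖z‖ r = r := max_eq_right hlt.le
      have hra : ‖z/(r:ℂ)‖ < 1 := by
        rw [norm_div, div_lt_one (by simpa [abs_of_pos hr0] using hr0)]
        simpa [abs_of_pos hr0] using hlt
      have hcongr : ∀ θ ∈ uIcc (-π) π, Real.log ‖z - (r:ℂ) * Complex.exp (θ * Complex.I)‖
          = Real.log r + Real.log ‖Complex.exp (θ * Complex.I) - z/(r:ℂ)‖ := by
        intro θ _
        have hfac : z - (r:ℂ) * Complex.exp (θ * Complex.I)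
            = (-(r:ℂ)) * (Complex.exp (θ * Complex.I) - z/(r:ℂ)) := by
          have : (r:ℂ) ≠ 0 := by exact_mod_cast hr0.ne'
          field_simp
          ring
        rw [hfac, norm_mul]
        have hnr : ‖(-(r:ℂ))‖ = r := by simp [abs_of_pos hr0]
        have h2 : ‖Complex.exp (θ * Complex.I) - z/(r:ℂ)‖ ≠ 0 := by
          have := hB θ
          rw [hfac] at this
          exact norm_ne_zero_iff.2 (mul_ne_zero_iff.1 this).2
        rw [hnr, Real.log_mul hr0.ne' h2]
      rw [intervalIntegral.integral_congr hcongr, intervalIntegral.integral_add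
        intervalIntegrable_const ?hi, lemC _ hra, intervalIntegral.integral_const, hmax]
      · rw [add_zero, smul_eq_mul]; ring
      case hi =>
        apply Continuous.intervalIntegrable
        apply Continuous.log (by fun_prop)
        intro θ
        rw [norm_ne_zero_iff]
        intro h
        rw [sub_eq_zero] at h
        have : ‖z/(r:ℂ)‖ = 1 := by rw [← h, normE]
        rw [this] at hra; linarith
  rw [hsplit, hterm1, hterm2]
  ring

lemma radial (t : ℝ) (ht0 : 0 ≤ t) (ht1 : t < 1) :
    ∫ r in (0:ℝ)..1, -(r * Real.log (max t r)) = (1 - t^2)/4 := by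
  have hsplit : (∫ r in (0:ℝ)..1, -(r * Real.log (max t r)))
      = (∫ r in (0:ℝ)..t, -(r * Real.log (max t r)))
        + ∫ r in t..1, -(r * Real.log (max t r)) := by
    rw [intervalIntegral.integral_add_adjacent_intervals]
    · -- integrable on [0,t] : equal to linear function there
      apply IntervalIntegrable.congr_ae (f := fun r => -(Real.log t) * r)
      · exact (continuous_const.mul continuous_id).intervalIntegrable _ _
      · rw [Filter.EventuallyEq, ae_restrict_iff' measurableSet_uIoc]
        filter_upwards with r hr
        rw [uIoc_of_le ht0] at hr
        rw [max_eq_left hr.2]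
        ring
    · -- integrable on [t,1]
      apply IntervalIntegrable.congr_ae (f := fun r => -(r * Real.log r))
      · exact ((Real.continuous_mul_log).neg).intervalIntegrable _ _
      · rw [Filter.EventuallyEq, ae_restrict_iff' measurableSet_uIoc]
        filter_upwards with r hr
        rw [uIoc_of_le ht1.le] at hr
        rw [max_eq_right hr.1.le]
  have h1 : (∫ r in (0:ℝ)..t, -(r * Real.log (max t r))) = -(t^2/2 * Real.log t) := by
    have hc : ∀ r ∈ uIcc (0:ℝ) t, -(r * Real.log (max t r)) = -(Real.log t) * r := by
      intro r hr
      rw [uIcc_of_le ht0] at hr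
      rw [max_eq_left hr.2]
      ring
    rw [intervalIntegral.integral_congr hc, intervalIntegral.integral_const_mul,
      integral_id]
    ring
  have h2 : (∫ r in t..1, -(r * Real.log (max t r))) = 1/4 - t^2/4 + t^2/2 * Real.log t := by
    have hc : ∀ r ∈ uIcc t 1, -(r * Real.log (max t r)) = -(r * Real.log r) := by
      intro r hr
      rw [uIcc_of_le ht1.le] at hr
      rw [max_eq_right hr.1]
    rw [intervalIntegral.integral_congr hc]
    set Φ : ℝ → ℝ := fun r => r^2/4 - r/2 * (r * Real.log r) with hΦ
    have hcont : ContinuousOn Φ (Icc t 1) := by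
      apply Continuous.continuousOn
      exact (continuous_pow 2 |>.div_const 4).sub
        ((continuous_id.div_const 2).mul Real.continuous_mul_log)
    have hderiv : ∀ r ∈ Ioo t 1, HasDerivWithinAt Φ (-(r * Real.log r)) (Ioi r) r := by
      intro r hr
      have hrpos : 0 < r := lt_of_le_of_lt ht0 hr.1
      have d1 : HasDerivAt (fun r : ℝ => r^2/4) (r/2) r := by
        have := (hasDerivAt_pow 2 r).div_const 4
        exact this.congr_deriv (by norm_num; ring)
      have dlog : HasDerivAt Real.log r⁻¹ r := Real.hasDerivAt_log hrpos.ne'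
      have d2 : HasDerivAt (fun r : ℝ => r * Real.log r) (Real.log r + 1) r := by
        have := (hasDerivAt_id r).mul dlog
        exact this.congr_deriv (by simp [hrpos.ne'])
      have d3 : HasDerivAt (fun r : ℝ => r/2 * (r * Real.log r))
          (1/2 * (r * Real.log r) + r/2 * (Real.log r + 1)) r :=
        ((hasDerivAt_id r).div_const 2).mul d2
      have := d1.sub d3
      have heq : r/2 - (1/2 * (r * Real.log r) + r/2 * (Real.log r + 1)) = -(r * Real.log r) := by
        ring
      rw [heq] at this
      exact this.hasDerivWithinAt
    have hint : IntervalIntegrable (fun r => -(r * Real.log r)) volume t 1 :=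
      ((Real.continuous_mul_log).neg).intervalIntegrable _ _
    rw [intervalIntegral.integral_eq_sub_of_hasDeriv_right_of_le ht1.le hcont hderiv hint]
    simp only [hΦ]
    norm_num
    ring
  rw [hsplit, h1, h2]
  ring

lemma radial_integrable (t : ℝ) (ht0 : 0 ≤ t) (ht1 : t < 1) :
    IntegrableOn (fun r => -(r * Real.log (max t r))) (Set.Ioo (0:ℝ) 1) := by
  have h1 : IntervalIntegrable (fun r => -(r * Real.log (max t r))) volume 0 t := by
    apply IntervalIntegrable.congr_ae (f := fun r => -(Real.log t) * r)
    · exact (continuous_const.mul continuous_id).intervalIntegrable _ _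
    · rw [Filter.EventuallyEq, ae_restrict_iff' measurableSet_uIoc]
      filter_upwards with r hr
      rw [uIoc_of_le ht0] at hr
      rw [max_eq_left hr.2]
      ring
  have h2 : IntervalIntegrable (fun r => -(r * Real.log (max t r))) volume t 1 := by
    apply IntervalIntegrable.congr_ae (f := fun r => -(r * Real.log r))
    · exact ((Real.continuous_mul_log).neg).intervalIntegrable _ _
    · rw [Filter.EventuallyEq, ae_restrict_iff' measurableSet_uIoc]
      filter_upwards with r hr
      rw [uIoc_of_le ht1.le] at hr
      rw [max_eq_right hr.1.le]
  have h := (h1.trans h2)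
  rw [intervalIntegrable_iff_integrableOn_Ioc_of_le (by norm_num)] at h
  exact h.mono_set Set.Ioo_subset_Ioc_self

theorem stmt0 (z : ℂ) (hz : z ∈ Metric.ball (0 : ℂ) 1) :
    ∫ ζ in Metric.ball (0 : ℂ) 1, |greenD z ζ| = (1 - ‖z‖ ^ 2) / 4 := by
  have hz1 : ‖z‖ < 1 := by simpa [Complex.dist_eq] using hz
  set t := ‖z‖ with htdef
  set F : ℝ × ℝ → ℝ := fun p =>
    p.1 * greenD z ((p.1 : ℂ) * Complex.exp (p.2 * Complex.I)) with hFdef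
  set s : Set (ℝ × ℝ) := Set.Ioo (0:ℝ) 1 ×ˢ Set.Ioo (-π) π with hsdef
  have hs_meas : MeasurableSet s := measurableSet_Ioo.prod measurableSet_Ioo
  -- step 0 : remove abs
  have step0 : ∫ ζ in Metric.ball (0 : ℂ) 1, |greenD z ζ|
      = ∫ ζ in Metric.ball (0 : ℂ) 1, greenD z ζ := by
    apply setIntegral_congr_fun measurableSet_ball
    intro ζ hζ
    have hζ1 : ‖ζ‖ < 1 := by simpa [Complex.dist_eq] using hζ
    exact abs_of_nonneg (green_nonneg hz1 hζ1)
  -- step 1-2 : polar coordinates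
  have hsymm : ∀ p : ℝ × ℝ, Complex.polarCoord.symm p
      = (p.1 : ℂ) * Complex.exp (p.2 * Complex.I) := by
    intro p
    rw [Complex.polarCoord_symm_apply, Complex.exp_mul_I, ← Complex.ofReal_cos,
      ← Complex.ofReal_sin]
  have step1 : ∫ ζ in Metric.ball (0 : ℂ) 1, greenD z ζ = ∫ p in s, F p := by
    rw [← MeasureTheory.integral_indicator measurableSet_ball,
      ← Complex.integral_comp_polarCoord_symm]
    rw [← MeasureTheory.integral_indicator (by
        rw [polarCoord_target]; exact measurableSet_Ioi.prod measurableSet_Ioo),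
      ← MeasureTheory.integral_indicator hs_meas]
    congr 1
    ext p
    rw [polarCoord_target]
    by_cases hp : p ∈ Set.Ioi (0:ℝ) ×ˢ Set.Ioo (-π) π
    · rw [Set.indicator_of_mem hp]
      have hnorm : ‖Complex.polarCoord.symm p‖ = p.1 := by
        rw [Complex.norm_polarCoord_symm, abs_of_pos hp.1]
      by_cases hp1 : p.1 < 1
      · have hmem : Complex.polarCoord.symm p ∈ Metric.ball (0:ℂ) 1 := by
          rw [Metric.mem_ball, Complex.dist_eq, sub_zero, hnorm]
          exact hp1
        have hmem' : p ∈ s := ⟨⟨hp.1, hp1⟩, hp.2⟩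
        rw [Set.indicator_of_mem hmem, Set.indicator_of_mem hmem', hFdef]
        simp only [smul_eq_mul, hsymm p]
      · have hmem : Complex.polarCoord.symm p ∉ Metric.ball (0:ℂ) 1 := by
          rw [Metric.mem_ball, Complex.dist_eq, sub_zero, hnorm]
          exact hp1
        have hmem' : p ∉ s := fun h => hp1 h.1.2
        rw [Set.indicator_of_notMem hmem, Set.indicator_of_notMem hmem', smul_zero]
    · rw [Set.indicator_of_notMem hp]
      have hmem' : p ∉ s := fun h => hp ⟨h.1.1, h.2⟩
      rw [Set.indicator_of_notMem hmem']
  -- measurability of F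
  have hF_meas : Measurable F := by
    apply Measurable.mul measurable_fst
    have hw : Continuous fun p : ℝ × ℝ => (p.1 : ℂ) * Complex.exp (p.2 * Complex.I) := by
      fun_prop
    have hg : Measurable fun w : ℂ => greenD z w := by
      apply Measurable.const_mul
      apply Real.measurable_log.comp
      apply Measurable.norm
      exact ((measurable_const.sub ((measurable_const.mul (Complex.continuous_conj.measurable)))).div
        (measurable_const.sub measurable_id))
    exact hg.comp hw.measurable
  -- step 3 : to lintegral
  have hF_nonneg : ∀ p ∈ s, 0 ≤ F p := by
    intro p hp
    apply mul_nonneg hp.1.1.le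
    apply green_nonneg hz1
    rw [norm_mul]
    have : ‖Complex.exp ((p.2:ℂ) * Complex.I)‖ = 1 := by
      simp [Complex.norm_exp_ofReal_mul_I]
    rw [this, mul_one]
    simp only [Complex.norm_real, Real.norm_eq_abs]
    rw [abs_of_pos hp.1.1]
    exact hp.1.2
  have step3 : ∫ p in s, F p = (∫⁻ p in s, ENNReal.ofReal (F p)).toReal := by
    rw [MeasureTheory.integral_eq_lintegral_of_nonneg_ae]
    · filter_upwards [ae_restrict_mem hs_meas] with p hp using hF_nonneg p hp
    · exact (hF_meas.aestronglyMeasurable)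
  -- step 4 : Tonelli
  have step4 : (∫⁻ p in s, ENNReal.ofReal (F p))
      = ∫⁻ r in Set.Ioo (0:ℝ) 1, ∫⁻ θ in Set.Ioo (-π) π, ENNReal.ofReal (F (r, θ)) := by
    rw [hsdef, Measure.volume_eq_prod, ← Measure.prod_restrict,
      MeasureTheory.lintegral_prod _ (hF_meas.ennreal_ofReal.aemeasurable)]
  -- step 5 : evaluate inner integral a.e.
  have hae : ∀ᵐ r ∂(volume.restrict (Set.Ioo (0:ℝ) 1)),
      (∫⁻ θ in Set.Ioo (-π) π, ENNReal.ofReal (F (r, θ)))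
        = ENNReal.ofReal (-(r * Real.log (max t r))) := by
    have h1 : ∀ᵐ r : ℝ ∂(volume.restrict (Set.Ioo (0:ℝ) 1)), r ≠ t := by
      apply ae_restrict_of_ae
      have h0 : (volume : Measure ℝ) {t} = 0 := Real.volume_singleton
      have := MeasureTheory.measure_eq_zero_iff_ae_notMem.1 h0
      filter_upwards [this] with r hr using hr
    filter_upwards [h1, ae_restrict_mem measurableSet_Ioo] with r hrt hr
    have hr0 : 0 < r := hr.1
    have hr1 : r < 1 := hr.2
    have hzr1 : ‖z‖ * r < 1 := by nlinarith [norm_nonneg z]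
    have hA : ∀ θ : ℝ, (1 - z * (starRingEnd ℂ) ((r:ℂ) * Complex.exp (θ * Complex.I))) ≠ 0 := by
      intro θ h
      rw [sub_eq_zero] at h
      have : ‖z * (starRingEnd ℂ) ((r:ℂ) * Complex.exp (θ * Complex.I))‖ = 1 := by
        rw [← h]; simp
      rw [norm_mul, RCLike.norm_conj, norm_mul] at this
      have hE : ‖Complex.exp ((θ:ℂ) * Complex.I)‖ = 1 := by
        simp [Complex.norm_exp_ofReal_mul_I]
      rw [hE] at this
      simp only [Complex.norm_real, Real.norm_eq_abs, abs_of_pos hr0, mul_one] at this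
      linarith
    have hB : ∀ θ : ℝ, (z - (r:ℂ) * Complex.exp (θ * Complex.I)) ≠ 0 := by
      intro θ h
      rw [sub_eq_zero] at h
      apply hrt
      rw [htdef, h, norm_mul]
      have hE : ‖Complex.exp ((θ:ℂ) * Complex.I)‖ = 1 := by
        simp [Complex.norm_exp_ofReal_mul_I]
      rw [hE, mul_one]
      simp [abs_of_pos hr0]
    have hcont : Continuous fun θ : ℝ => F (r, θ) := by
      apply Continuous.mul continuous_const
      apply Continuous.mul continuous_const
      apply Continuous.log
      · apply Continuous.norm
        apply Continuous.div
        · apply continuous_const.sub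
          apply continuous_const.mul
          exact Complex.continuous_conj.comp (by fun_prop)
        · fun_prop
        · exact hB
      · intro θ
        rw [norm_ne_zero_iff]
        exact div_ne_zero (hA θ) (hB θ)
    have hint : IntegrableOn (fun θ => F (r, θ)) (Set.Ioo (-π) π) := by
      have := hcont.intervalIntegrable (μ := volume) (-π) π
      rw [intervalIntegrable_iff_integrableOn_Ioc_of_le (by linarith [Real.pi_pos])] at this
      exact this.mono_set Set.Ioo_subset_Ioc_self
    have hnn : 0 ≤ᵐ[volume.restrict (Set.Ioo (-π) π)] fun θ => F (r, θ) := by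
      filter_upwards [ae_restrict_mem measurableSet_Ioo] with θ hθ
      exact hF_nonneg (r, θ) ⟨hr, hθ⟩
    rw [← MeasureTheory.ofReal_integral_eq_lintegral_ofReal hint hnn]
    congr 1
    rw [← MeasureTheory.integral_Ioc_eq_integral_Ioo,
      ← intervalIntegral.integral_of_le (by linarith [Real.pi_pos] : -π ≤ π)]
    have hFeq : ∀ θ ∈ Set.uIcc (-π) π, F (r, θ) = (r * (1 / (2 * π))) *
        Real.log ‖(1 - z * (starRingEnd ℂ) ((r:ℂ) * Complex.exp (θ * Complex.I)))
          / (z - (r:ℂ) * Complex.exp (θ * Complex.I))‖ := by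
      intro θ _
      simp only [hFdef, greenD]
      ring
    rw [intervalIntegral.integral_congr hFeq, intervalIntegral.integral_const_mul,
      inner_eval z hz1 hr0 hr1 hrt]
    have hπ : π ≠ 0 := Real.pi_ne_zero
    simp only [htdef]
    field_simp
  -- step 6 : outer integral
  have step6 : (∫⁻ r in Set.Ioo (0:ℝ) 1, ∫⁻ θ in Set.Ioo (-π) π, ENNReal.ofReal (F (r, θ)))
      = ENNReal.ofReal ((1 - t^2)/4) := by
    rw [lintegral_congr_ae hae]
    have hnn : 0 ≤ᵐ[volume.restrict (Set.Ioo (0:ℝ) 1)]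
        fun r => -(r * Real.log (max t r)) := by
      filter_upwards [ae_restrict_mem measurableSet_Ioo] with r hr
      have hmax1 : max t r ≤ 1 := max_le hz1.le hr.2.le
      have hmax0 : 0 ≤ max t r := le_max_of_le_right hr.1.le
      have := Real.log_nonpos hmax0 hmax1
      show (0:ℝ) ≤ -(r * Real.log (max t r))
      nlinarith [hr.1.le]
    rw [← MeasureTheory.ofReal_integral_eq_lintegral_ofReal
      (radial_integrable t (norm_nonneg z) hz1) hnn]
    congr 1
    rw [← MeasureTheory.integral_Ioc_eq_integral_Ioo,
      ← intervalIntegral.integral_of_le (by norm_num : (0:ℝ) ≤ 1)]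
    exact radial t (norm_nonneg z) hz1
  rw [step0, step1, step3, step4, step6, ENNReal.toReal_ofReal]
  nlinarith [norm_nonneg z]
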